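/- Substituting ψ₂*⁰ = (∂_u T)³ Υ∘(relabeled) into the field equation ð ψ₂*⁰ + L ∂_u ψ₂*⁰ + 3(∂_u L) ψ₂*⁰ = 0 (source-free case), where L = −ðT/∂_u T, yields the equation ð Υ − (ðT/∂_u T) ∂_u Υ = 0 for Υ; hence in the vacuum case ψ₂*⁰ = (∂_u T)³ Υ̂(T) for an arbitrary function Υ̂. -/

import Mathlib

/-- substituting `ψ₂*⁰ = (∂_u T)³ Υ` into the source-free field
equation `ð ψ₂*⁰ + L ∂_u ψ₂*⁰ + 3(∂_u L) ψ₂*⁰ = 0`, with `L = −ðT/∂_u T` and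
`ð f = P ∂_ζ̃ f`, `P = 1+ζζ̃`, one finds
`ð ψ + L ∂_u ψ + 3(∂_u L) ψ = (∂_u T)³ (ð Υ + L ∂_u Υ)`; hence the field equation
holds iff `ð Υ − (ðT/∂_u T) ∂_u Υ = 0`, which is solved by `Υ = Υ̂ ∘ T` for an
arbitrary differentiable `Υ̂` (in particular `ψ₂*⁰ = (∂_u T)³ Υ̂(T)` in vacuum). -/
theorem stmt_12 (T Υ Tu Tz L ψ : ℂ → ℂ → ℂ → ℂ)
    (hT1 : ∀ ζ z : ℂ, Differentiable ℂ (fun u => T u ζ z))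
    (hT2 : ∀ u ζ : ℂ, Differentiable ℂ (fun z => T u ζ z))
    (hTu : ∀ u ζ z : ℂ, Tu u ζ z = deriv (fun v => T v ζ z) u)
    (hTz : ∀ u ζ z : ℂ, Tz u ζ z = deriv (fun w => T u ζ w) z)
    (hTu1 : ∀ ζ z : ℂ, Differentiable ℂ (fun u => Tu u ζ z))
    (hTu2 : ∀ u ζ : ℂ, Differentiable ℂ (fun z => Tu u ζ z))
    (hTz1 : ∀ ζ z : ℂ, Differentiable ℂ (fun u => Tz u ζ z))
    (hcomm : ∀ u ζ z : ℂ,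
      deriv (fun w => Tu u ζ w) z = deriv (fun v => Tz v ζ z) u)
    (hΥ1 : ∀ ζ z : ℂ, Differentiable ℂ (fun u => Υ u ζ z))
    (hΥ2 : ∀ u ζ : ℂ, Differentiable ℂ (fun z => Υ u ζ z))
    (hne : ∀ u ζ z : ℂ, Tu u ζ z ≠ 0)
    (hL : ∀ u ζ z : ℂ, L u ζ z = -((1 + ζ * z) * Tz u ζ z) / Tu u ζ z)
    (hψ : ∀ u ζ z : ℂ, ψ u ζ z = (Tu u ζ z) ^ 3 * Υ u ζ z) :
    (∀ u ζ z : ℂ,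
      (1 + ζ * z) * deriv (fun w => ψ u ζ w) z +
          L u ζ z * deriv (fun v => ψ v ζ z) u +
          3 * deriv (fun v => L v ζ z) u * ψ u ζ z =
        (Tu u ζ z) ^ 3 *
          ((1 + ζ * z) * deriv (fun w => Υ u ζ w) z +
            L u ζ z * deriv (fun v => Υ v ζ z) u)) ∧
    (∀ Υhat : ℂ → ℂ, Differentiable ℂ Υhat →
      (∀ u ζ z : ℂ, Υ u ζ z = Υhat (T u ζ z)) →
      ∀ u ζ z : ℂ,
        (1 + ζ * z) * deriv (fun w => ψ u ζ w) z +
            L u ζ z * deriv (fun v => ψ v ζ z) u +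
            3 * deriv (fun v => L v ζ z) u * ψ u ζ z = 0) := by
  have key : ∀ u ζ z : ℂ,
      (1 + ζ * z) * deriv (fun w => ψ u ζ w) z +
          L u ζ z * deriv (fun v => ψ v ζ z) u +
          3 * deriv (fun v => L v ζ z) u * ψ u ζ z =
        (Tu u ζ z) ^ 3 *
          ((1 + ζ * z) * deriv (fun w => Υ u ζ w) z +
            L u ζ z * deriv (fun v => Υ v ζ z) u) := by
    intro u ζ z
    set P : ℂ := 1 + ζ * z with hP
    -- deriv of ψ in z
    have hψz : (fun w => ψ u ζ w) = fun w => (Tu u ζ w) ^ 3 * Υ u ζ w := by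
      funext w; exact hψ u ζ w
    have hψu : (fun v => ψ v ζ z) = fun v => (Tu v ζ z) ^ 3 * Υ v ζ z := by
      funext v; exact hψ v ζ z
    have hLu : (fun v => L v ζ z) = fun v => -(P * Tz v ζ z) / Tu v ζ z := by
      funext v; exact hL v ζ z
    have hTuz := ((hTu2 u ζ) z).hasDerivAt
    have hTuu := ((hTu1 ζ z) u).hasDerivAt
    have hTzu := ((hTz1 ζ z) u).hasDerivAt
    have hΥz := ((hΥ2 u ζ) z).hasDerivAt
    have hΥu := ((hΥ1 ζ z) u).hasDerivAt
    have dψz : deriv (fun w => ψ u ζ w) z =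
        3 * (Tu u ζ z) ^ 2 * deriv (fun w => Tu u ζ w) z * Υ u ζ z
          + (Tu u ζ z) ^ 3 * deriv (fun w => Υ u ζ w) z := by
      rw [hψz]
      have := ((hTuz.fun_pow 3).fun_mul hΥz).deriv
      rw [this]; ring
    have dψu : deriv (fun v => ψ v ζ z) u =
        3 * (Tu u ζ z) ^ 2 * deriv (fun v => Tu v ζ z) u * Υ u ζ z
          + (Tu u ζ z) ^ 3 * deriv (fun v => Υ v ζ z) u := by
      rw [hψu]
      have := ((hTuu.fun_pow 3).fun_mul hΥu).deriv
      rw [this]; ring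
    have dLu : deriv (fun v => L v ζ z) u =
        (-(P * deriv (fun v => Tz v ζ z) u) * Tu u ζ z
          - (-(P * Tz u ζ z)) * deriv (fun v => Tu v ζ z) u) / (Tu u ζ z) ^ 2 := by
      rw [hLu]
      exact (((hTzu.const_mul P).neg).div hTuu (hne u ζ z)).deriv
    rw [dψz, dψu, dLu, hL u ζ z, hψ u ζ z, hcomm u ζ z]
    field_simp [hne u ζ z]
    ring
  refine ⟨key, ?_⟩
  intro Υhat hΥhat hcomp u ζ z
  rw [key u ζ z]
  have hΥzf : (fun w => Υ u ζ w) = fun w => Υhat (T u ζ w) := by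
    funext w; exact hcomp u ζ w
  have hΥuf : (fun v => Υ v ζ z) = fun v => Υhat (T v ζ z) := by
    funext v; exact hcomp v ζ z
  have dTz := ((hT2 u ζ) z).hasDerivAt
  have dTu := ((hT1 ζ z) u).hasDerivAt
  have dΥz : deriv (fun w => Υ u ζ w) z = deriv Υhat (T u ζ z) * Tz u ζ z := by
    rw [hΥzf, hTz u ζ z]
    exact (((hΥhat (T u ζ z)).hasDerivAt).comp z dTz).deriv
  have dΥu : deriv (fun v => Υ v ζ z) u = deriv Υhat (T u ζ z) * Tu u ζ z := by
    rw [hΥuf, hTu u ζ z]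
    exact (((hΥhat (T u ζ z)).hasDerivAt).comp u dTu).deriv
  rw [dΥz, dΥu, hL u ζ z]
  field_simp [hne u ζ z]
  ring
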